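/- Under the hypotheses of the previous setting (S an m-dimensional space of C^{m-1} functions on [a,b] containing constants, DS an (m-1)-dimensional EC-space, f₁ ≡ 1 and f₂,...,f_m the transition functions), define B_ℓ = f_ℓ - f_{ℓ+1} for ℓ = 1,...,m-1 and B_m = f_m. Then: (i) ∑_{ℓ=1}^m B_ℓ ≡ 1 on [a,b]; (ii) B_ℓ vanishes to order exactly ℓ-1 at a and to order exactly m-ℓ at b; (iii) B_ℓ > 0 on (a,b). -/

import Mathlib

open Set
set_option maxHeartbeats 1000000

def VanishesTo (F : ℝ → ℝ) (x : ℝ) (μ : ℕ) : Prop :=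
  ∀ r < μ, iteratedDeriv r F x = 0

def AtMostZeros (m : ℕ) (I : Set ℝ) (F : ℝ → ℝ) : Prop :=
  ∀ (h : ℕ) (τ : Fin h → ℝ) (μ : Fin h → ℕ),
    Function.Injective τ → (∀ j, τ j ∈ I) → (∀ j, 1 ≤ μ j ∧ μ j ≤ m) →
    (∑ j, μ j) = m → ¬ (∀ j, VanishesTo F (τ j) (μ j))

namespace Stmt8Aux

lemma iteratedDeriv_zero_fun {n : ℕ} {x : ℝ} : iteratedDeriv n (fun _ : ℝ => (0:ℝ)) x = 0 := by
  induction n generalizing x with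
  | zero => simp
  | succ k ih =>
    rw [iteratedDeriv_succ']
    have h : deriv (fun _ : ℝ => (0:ℝ)) = fun _ : ℝ => (0:ℝ) := by
      funext y; exact deriv_const y 0
    rw [h]; exact ih

lemma iteratedDeriv_const_fun {n : ℕ} (hn : 1 ≤ n) {x c : ℝ} :
    iteratedDeriv n (fun _ : ℝ => c) x = 0 := by
  obtain ⟨k, rfl⟩ := Nat.exists_eq_add_of_le hn
  rw [add_comm, iteratedDeriv_succ']
  have h : deriv (fun _ : ℝ => c) = fun _ : ℝ => (0:ℝ) := by
    funext y; exact deriv_const y c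
  rw [h]; exact iteratedDeriv_zero_fun

lemma iteratedDeriv_sub' {n : ℕ} {f g : ℝ → ℝ} (hf : ContDiff ℝ (n:ℕ∞) f)
    (hg : ContDiff ℝ (n:ℕ∞) g) {x : ℝ} :
    iteratedDeriv n (fun y => f y - g y) x = iteratedDeriv n f x - iteratedDeriv n g x := by
  have : (fun y => f y - g y) = f - g := rfl
  rw [this]
  simp_rw [← iteratedDerivWithin_univ]
  exact iteratedDerivWithin_sub (Set.mem_univ x) uniqueDiffOn_univ hf.contDiffWithinAt hg.contDiffWithinAt

lemma itDW_eq {N n : ℕ} {F : ℝ → ℝ} (hF : ContDiff ℝ (N:ℕ∞) F) {s : Set ℝ}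
    (hs : UniqueDiffOn ℝ s) {x : ℝ} (hx : x ∈ s) (hn : n ≤ N) :
    iteratedDerivWithin n F s x = iteratedDeriv n F x := by
  have h1 : HasFTaylorSeriesUpToOn (N:ℕ∞) F (ftaylorSeries ℝ F) s :=
    (hasFTaylorSeriesUpToOn_univ_iff.mpr (contDiff_iff_ftaylorSeries.mp hF)).mono (subset_univ s)
  have h2 := h1.eq_iteratedFDerivWithin_of_uniqueDiffOn (by exact_mod_cast hn) hs hx
  rw [iteratedDerivWithin_eq_iteratedFDerivWithin, ← h2]
  rfl

lemma AMZ_apply {m k : ℕ} {I : Set ℝ} {G : ℝ → ℝ} (hAMZ : AtMostZeros m I G)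
    (τ : Fin k → ℝ) (μ : Fin k → ℕ) (hinj : Function.Injective τ)
    (hmem : ∀ j, τ j ∈ I) (hsum : ∑ j, μ j = m)
    (hvan : ∀ j, ∀ i < μ j, iteratedDeriv i G (τ j) = 0) : False := by
  classical
  have e := Fintype.equivFin {j : Fin k // μ j ≠ 0}
  apply hAMZ _ (fun i => τ (e.symm i).1) (fun i => μ (e.symm i).1)
  · intro i j hij
    exact e.symm.injective (Subtype.ext (hinj hij))
  · intro j; exact hmem _
  · intro j
    refine ⟨Nat.one_le_iff_ne_zero.mpr (e.symm j).2, ?_⟩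
    calc μ (e.symm j).1 ≤ ∑ i, μ i :=
        Finset.single_le_sum (fun i _ => Nat.zero_le _) (Finset.mem_univ _)
      _ = m := hsum
  · calc ∑ i, μ (e.symm i).1 = ∑ t : {j : Fin k // μ j ≠ 0}, μ t.1 :=
        Equiv.sum_comp e.symm (fun t => μ t.1)
      _ = ∑ j ∈ Finset.univ.filter (fun j => μ j ≠ 0), μ j :=
        (Finset.sum_subtype _ (by simp) _).symm
      _ = ∑ j, μ j := Finset.sum_filter_ne_zero Finset.univ
      _ = m := hsum
  · intro j
    exact hvan _

lemma AMZ4 {m : ℕ} {a b t₁ t₂ : ℝ} {G : ℝ → ℝ} (hAMZ : AtMostZeros m (Set.Icc a b) G)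
    (h1 : a < t₁) (h2 : t₁ < t₂) (h3 : t₂ < b)
    {p r₁ r₂ q : ℕ} (hsum : p + r₁ + r₂ + q = m)
    (hp : ∀ i < p, iteratedDeriv i G a = 0)
    (hr1 : ∀ i < r₁, iteratedDeriv i G t₁ = 0)
    (hr2 : ∀ i < r₂, iteratedDeriv i G t₂ = 0)
    (hq : ∀ i < q, iteratedDeriv i G b = 0) : False := by
  apply AMZ_apply hAMZ ![a, t₁, t₂, b] ![p, r₁, r₂, q]
  · intro i j hij
    fin_cases i <;> fin_cases j <;> simp_all <;> linarith
  · intro j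
    fin_cases j <;> simp [Set.mem_Icc] <;> first | (constructor <;> linarith) | linarith
  · rw [Fin.sum_univ_four]
    exact hsum
  · intro j
    fin_cases j <;> simp only [Fin.isValue, Matrix.cons_val', Matrix.cons_val_zero,
      Matrix.cons_val_one, Matrix.head_cons, Matrix.empty_val', Matrix.cons_val_fin_one,
      Matrix.head_fin_const] <;> intro i hi
    · exact hp i hi
    · exact hr1 i hi
    · exact hr2 i hi
    · exact hq i hi


lemma taylor_core {N : ℕ} {F : ℝ → ℝ} (hF : ContDiff ℝ (N:ℕ∞) F) {a x : ℝ} (hax : a < x)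
    {n : ℕ} (hn1 : 1 ≤ n) (hn : n ≤ N) (h0 : ∀ r < n, iteratedDeriv r F a = 0) :
    ∃ ξ ∈ Set.Ioo a x, F x = iteratedDeriv n F ξ * (x - a) ^ n / (Nat.factorial n : ℝ) := by
  obtain ⟨k, rfl⟩ : ∃ k, n = k + 1 := ⟨n - 1, by omega⟩
  have hud : UniqueDiffOn ℝ (Set.Icc a x) := uniqueDiffOn_Icc hax
  have hcd : ContDiffOn ℝ (k:ℕ∞) F (Set.Icc a x) :=
    (hF.of_le (by exact_mod_cast (by omega : k ≤ N))).contDiffOn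
  have hdiff : DifferentiableOn ℝ (iteratedDerivWithin k F (Set.Icc a x)) (Set.Ioo a x) := by
    apply DifferentiableOn.congr
      (f := iteratedDeriv k F)
    · exact ((hF.differentiable_iteratedDeriv k
        (by exact_mod_cast (by omega : k < N))).differentiableOn)
    · intro y hy
      exact itDW_eq hF hud (Set.Ioo_subset_Icc_self hy) (by omega)
  have htl := taylor_mean_remainder_lagrange hax.ne (by rwa [uIcc_of_le hax.le])
    (by rwa [uIcc_of_le hax.le, uIoo_of_lt hax])
  rw [uIcc_of_le hax.le, uIoo_of_lt hax] at htl
  obtain ⟨ξ, hξ, heq⟩ := htl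
  refine ⟨ξ, hξ, ?_⟩
  have hT : taylorWithinEval F k (Set.Icc a x) a x = 0 := by
    rw [taylor_within_apply]
    apply Finset.sum_eq_zero
    intro i hi
    rw [Finset.mem_range] at hi
    have hia : iteratedDerivWithin i F (Set.Icc a x) a =
        iteratedDeriv i F a :=
      itDW_eq hF hud (Set.left_mem_Icc.mpr hax.le) (by omega)
    rw [hia, h0 i (by omega), smul_zero]
  rw [hT, sub_zero] at heq
  rw [heq, itDW_eq hF hud (Set.Ioo_subset_Icc_self hξ) (by omega)]

lemma sign_near {N : ℕ} {F : ℝ → ℝ} (hF : ContDiff ℝ (N:ℕ∞) F) {a b : ℝ} (hab : a < b)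
    {n : ℕ} (hn : n ≤ N) (h0 : ∀ r < n, iteratedDeriv r F a = 0)
    (hc : iteratedDeriv n F a ≠ 0) :
    ∃ x₀ ∈ Set.Ioo a b, ∀ x ∈ Set.Ioo a x₀, 0 < F x * iteratedDeriv n F a := by
  set c := iteratedDeriv n F a with hcdef
  have hgc : Continuous (fun y => iteratedDeriv n F y * c) :=
    (hF.continuous_iteratedDeriv n (by exact_mod_cast hn)).mul continuous_const
  have hpos : 0 < iteratedDeriv n F a * c := by
    rw [← hcdef]; exact mul_self_pos.mpr hc
  have hnb : {y | 0 < iteratedDeriv n F y * c} ∈ nhds a :=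
    (hgc.continuousAt (x := a)).preimage_mem_nhds (Ioi_mem_nhds hpos)
  obtain ⟨δ, hδ, hball⟩ := Metric.mem_nhds_iff.mp hnb
  refine ⟨min (a + δ) ((a + b) / 2), ⟨by simp [hδ]; linarith, ?_⟩, ?_⟩
  · calc min (a + δ) ((a + b) / 2) ≤ (a + b) / 2 := min_le_right _ _
      _ < b := by linarith
  · intro x hx
    have hxa : a < x := hx.1
    have hxδ : x < a + δ := lt_of_lt_of_le hx.2 (min_le_left _ _)
    have hmem : ∀ y ∈ Set.Icc a x, 0 < iteratedDeriv n F y * c := by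
      intro y hy
      apply hball
      simp only [Metric.mem_ball, Real.dist_eq, abs_lt]
      constructor <;> [linarith [hy.1]; linarith [hy.2]]
    rcases Nat.eq_zero_or_pos n with hn0 | hn1
    · subst hn0
      simpa using hmem x ⟨hxa.le, le_refl x⟩
    · obtain ⟨ξ, hξ, heq⟩ := taylor_core hF hxa hn1 hn h0
      rw [heq]
      have h1 : 0 < iteratedDeriv n F ξ * c :=
        hmem ξ ⟨hξ.1.le, hξ.2.le⟩
      have h2 : 0 < (x - a) ^ n / (Nat.factorial n : ℝ) := by
        apply div_pos (pow_pos (by linarith) n)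
        exact_mod_cast Nat.factorial_pos n
      calc (0:ℝ) < (iteratedDeriv n F ξ * c) * ((x - a) ^ n / (Nat.factorial n : ℝ)) := mul_pos h1 h2
        _ = iteratedDeriv n F ξ * (x - a) ^ n / (Nat.factorial n : ℝ) * c := by ring

end Stmt8Aux

lemma Stmt8Aux.tel (g : ℕ → ℝ) : ∀ m : ℕ, ∑ ℓ ∈ Finset.Icc 1 m, (g ℓ - g (ℓ+1)) = g 1 - g (m+1)
  | 0 => by simp
  | (m+1) => by
      rw [Finset.sum_Icc_succ_top (by omega), Stmt8Aux.tel g m]; ring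

theorem stmt_8 (m : ℕ) (hm : 2 ≤ m) (a b : ℝ) (hab : a < b)
    (S : Submodule ℝ (ℝ → ℝ))
    (hdim : Module.finrank ℝ S = m)
    (hsm : ∀ F ∈ S, ContDiff ℝ (m - 1 : ℕ) F)
    (hDSdim : Module.finrank ℝ ↥(Submodule.span ℝ (deriv '' (S : Set (ℝ → ℝ)))) = m - 1)
    (hDSEC : ∀ F ∈ S, (∃ x ∈ Set.Icc a b, deriv F x ≠ 0) →
      AtMostZeros (m - 1) (Set.Icc a b) (deriv F))
    (f : ℕ → ℝ → ℝ)
    (hf1 : f 1 = fun _ => 1)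
    (hftop : f (m + 1) = fun _ => 0)
    (hfS : ∀ ℓ, 1 ≤ ℓ → ℓ ≤ m → f ℓ ∈ S)
    (ha0 : ∀ ℓ, 2 ≤ ℓ → ℓ ≤ m → ∀ r ≤ ℓ - 2, iteratedDeriv r (f ℓ) a = 0)
    (hb1 : ∀ ℓ, 2 ≤ ℓ → ℓ ≤ m → f ℓ b = 1)
    (hb0 : ∀ ℓ, 2 ≤ ℓ → ℓ ≤ m → ∀ r, 1 ≤ r → r ≤ m - ℓ → iteratedDeriv r (f ℓ) b = 0)
    (B : ℕ → ℝ → ℝ)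
    (hB : ∀ ℓ, 1 ≤ ℓ → ℓ ≤ m → B ℓ = fun x => f ℓ x - f (ℓ + 1) x) :
    (∀ x ∈ Set.Icc a b, ∑ ℓ ∈ Finset.Icc 1 m, B ℓ x = 1) ∧
    (∀ ℓ, 1 ≤ ℓ → ℓ ≤ m →
      ((∀ r < ℓ - 1, iteratedDeriv r (B ℓ) a = 0) ∧ iteratedDeriv (ℓ - 1) (B ℓ) a ≠ 0) ∧
      ((∀ r < m - ℓ, iteratedDeriv r (B ℓ) b = 0) ∧ iteratedDeriv (m - ℓ) (B ℓ) b ≠ 0) ∧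
      (∀ x ∈ Set.Ioo a b, 0 < B ℓ x)) := by
  classical
  have hm1 : (1:ℕ) ≤ m - 1 := by omega
  have haI : a ∈ Set.Icc a b := Set.left_mem_Icc.mpr hab.le
  have hbI : b ∈ Set.Icc a b := Set.right_mem_Icc.mpr hab.le
  have hzeroS : (fun _ : ℝ => (0:ℝ)) ∈ S := S.zero_mem
  have hfS' : ∀ ℓ, 1 ≤ ℓ → ℓ ≤ m + 1 → f ℓ ∈ S := by
    intro ℓ h1 h2
    rcases eq_or_lt_of_le h2 with he | hl
    · rw [he, hftop]; exact hzeroS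
    · exact hfS ℓ h1 (by omega)
  have hsmf : ∀ ℓ, 1 ≤ ℓ → ℓ ≤ m + 1 → ContDiff ℝ ((m-1 : ℕ) : ℕ∞) (f ℓ) :=
    fun ℓ h1 h2 => hsm _ (hfS' ℓ h1 h2)
  have hBS : ∀ ℓ, 1 ≤ ℓ → ℓ ≤ m → B ℓ ∈ S := by
    intro ℓ h1 h2
    rw [hB ℓ h1 h2]
    exact S.sub_mem (hfS' ℓ h1 (by omega)) (hfS' (ℓ+1) (by omega) (by omega))
  have hsmB : ∀ ℓ, 1 ≤ ℓ → ℓ ≤ m → ContDiff ℝ ((m-1:ℕ):ℕ∞) (B ℓ) :=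
    fun ℓ h1 h2 => hsm _ (hBS ℓ h1 h2)
  have hdiffS : ∀ F ∈ S, Differentiable ℝ F := by
    intro F hF
    exact (hsm F hF).differentiable (by exact_mod_cast (by omega : m - 1 ≠ 0))
  have hBit : ∀ ℓ, 1 ≤ ℓ → ℓ ≤ m → ∀ r, r ≤ m - 1 → ∀ x : ℝ,
      iteratedDeriv r (B ℓ) x = iteratedDeriv r (f ℓ) x - iteratedDeriv r (f (ℓ+1)) x := by
    intro ℓ h1 h2 r hr x
    rw [hB ℓ h1 h2]
    exact Stmt8Aux.iteratedDeriv_sub'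
      ((hsmf ℓ h1 (by omega)).of_le (by exact_mod_cast hr))
      ((hsmf (ℓ+1) (by omega) (by omega)).of_le (by exact_mod_cast hr))
  have ha0' : ∀ ℓ, 2 ≤ ℓ → ℓ ≤ m + 1 → ∀ r ≤ ℓ - 2, iteratedDeriv r (f ℓ) a = 0 := by
    intro ℓ h1 h2 r hr
    rcases eq_or_lt_of_le h2 with he | hl
    · rw [he, hftop]; exact Stmt8Aux.iteratedDeriv_zero_fun
    · exact ha0 ℓ h1 (by omega) r hr
  have hval_b : ∀ ℓ, 1 ≤ ℓ → ℓ ≤ m → f ℓ b = 1 := by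
    intro ℓ h1 h2
    rcases eq_or_lt_of_le h1 with he | hl
    · rw [← he, hf1]
    · exact hb1 ℓ (by omega) h2
  have hval_a0 : ∀ ℓ, 2 ≤ ℓ → ℓ ≤ m + 1 → f ℓ a = 0 := by
    intro ℓ h1 h2
    have := ha0' ℓ h1 h2 0 (by omega)
    simpa using this
  -- Part (i)
  have part1 : ∀ x ∈ Set.Icc a b, ∑ ℓ ∈ Finset.Icc 1 m, B ℓ x = 1 := by
    intro x _
    have hsum : ∑ ℓ ∈ Finset.Icc 1 m, B ℓ x
        = ∑ ℓ ∈ Finset.Icc 1 m, (f ℓ x - f (ℓ+1) x) := by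
      apply Finset.sum_congr rfl
      intro ℓ hℓ
      rw [Finset.mem_Icc] at hℓ
      rw [hB ℓ hℓ.1 hℓ.2]
    rw [hsum, Stmt8Aux.tel (fun ℓ => f ℓ x) m, hf1, hftop]
    norm_num
  -- vanishing at a
  have hVA : ∀ ℓ, 1 ≤ ℓ → ℓ ≤ m → ∀ r, r < ℓ - 1 → iteratedDeriv r (B ℓ) a = 0 := by
    intro ℓ h1 h2 r hr
    rw [hBit ℓ h1 h2 r (by omega),
      ha0' ℓ (by omega) (by omega) r (by omega),
      ha0' (ℓ+1) (by omega) (by omega) r (by omega), sub_zero]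
  -- vanishing at b
  have hVB : ∀ ℓ, 1 ≤ ℓ → ℓ ≤ m → ∀ r, r < m - ℓ → iteratedDeriv r (B ℓ) b = 0 := by
    intro ℓ h1 h2 r hr
    have hℓm : ℓ + 1 ≤ m := by omega
    rw [hBit ℓ h1 h2 r (by omega)]
    rcases Nat.eq_zero_or_pos r with h0 | hpos
    · subst h0
      simp only [iteratedDeriv_zero]
      rw [hval_b ℓ h1 h2, hval_b (ℓ+1) (by omega) hℓm, sub_self]
    · rw [hb0 (ℓ+1) (by omega) hℓm r hpos (by omega), sub_zero]
      rcases eq_or_lt_of_le h1 with he | hℓ2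
      · rw [← he, hf1]; exact Stmt8Aux.iteratedDeriv_const_fun hpos
      · exact hb0 ℓ (by omega) h2 r hpos (by omega)
  have hBa0 : ∀ ℓ, 2 ≤ ℓ → ℓ ≤ m → B ℓ a = 0 := by
    intro ℓ h1 h2
    have := hVA ℓ (by omega) h2 0 (by omega)
    simpa using this
  have hB1a : B 1 a = 1 := by
    rw [hB 1 (by omega) (by omega)]
    show f 1 a - f 2 a = 1
    have h2a : f 2 a = 0 := hval_a0 2 (by omega) (by omega)
    have h1a : f 1 a = 1 := by rw [hf1]
    rw [h1a, h2a]; norm_num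
  have hBb0 : ∀ ℓ, 1 ≤ ℓ → ℓ < m → B ℓ b = 0 := by
    intro ℓ h1 h2
    have := hVB ℓ h1 (by omega) 0 (by omega)
    simpa using this
  have hBmb : B m b = 1 := by
    rw [hB m (by omega) (by omega)]
    show f m b - f (m+1) b = 1
    rw [hval_b m (by omega) (by omega), hftop]
    norm_num
  -- constancy from vanishing derivative
  have hconst : ∀ F : ℝ → ℝ, Differentiable ℝ F → (∀ x ∈ Set.Icc a b, deriv F x = 0) →
      ∀ x ∈ Set.Icc a b, ∀ y ∈ Set.Icc a b, F x = F y := by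
    have key : ∀ F : ℝ → ℝ, Differentiable ℝ F → (∀ x ∈ Set.Icc a b, deriv F x = 0) →
        ∀ x ∈ Set.Icc a b, F x = F a := by
      intro F hd h0 x hx
      rcases eq_or_lt_of_le hx.1 with he | hax
      · rw [← he]
      · obtain ⟨c, hc, hceq⟩ := exists_deriv_eq_slope F hax
          hd.continuous.continuousOn (hd.differentiableOn)
        rw [h0 c ⟨hc.1.le, hc.2.le.trans hx.2⟩] at hceq
        have hxa : x - a ≠ 0 := by intro h; apply hax.ne'; linarith [sub_eq_zero.mp h]
        field_simp at hceq
        linarith [hceq]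
    intro F hd h0 x hx y hy
    rw [key F hd h0 x hx, key F hd h0 y hy]
  -- main zero-counting tool
  have hder1 : ∀ (F : ℝ → ℝ) (i : ℕ) (x : ℝ),
      iteratedDeriv i (deriv F) x = iteratedDeriv (i+1) F x :=
    fun F i x => (congrFun (iteratedDeriv_succ' (n := i) (f := F)) x).symm
  have hforce : ∀ F ∈ S, ∀ (t₁ t₂ : ℝ), a < t₁ → t₁ < t₂ → t₂ < b →
      ∀ (p r₁ r₂ q : ℕ), p + r₁ + r₂ + q = m - 1 →
      (∀ i, i < p → iteratedDeriv (i+1) F a = 0) →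
      (∀ i, i < r₁ → iteratedDeriv (i+1) F t₁ = 0) →
      (∀ i, i < r₂ → iteratedDeriv (i+1) F t₂ = 0) →
      (∀ i, i < q → iteratedDeriv (i+1) F b = 0) →
      ∀ x ∈ Set.Icc a b, ∀ y ∈ Set.Icc a b, F x = F y := by
    intro F hFS t₁ t₂ ht1 ht2 ht3 p r₁ r₂ q hsum hp hr1 hr2 hq
    by_cases hex : ∃ x ∈ Set.Icc a b, deriv F x ≠ 0
    · exact (Stmt8Aux.AMZ4 (hDSEC F hFS hex) ht1 ht2 ht3 hsum
        (fun i hi => (hder1 F i a).trans (hp i hi))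
        (fun i hi => (hder1 F i t₁).trans (hr1 i hi))
        (fun i hi => (hder1 F i t₂).trans (hr2 i hi))
        (fun i hi => (hder1 F i b).trans (hq i hi))).elim
    · push_neg at hex
      exact hconst F (hdiffS F hFS) hex

  -- convenient interior points
  have hmid : a < a + (b-a)/3 ∧ a + (b-a)/3 < a + 2*(b-a)/3 ∧ a + 2*(b-a)/3 < b := by
    refine ⟨by linarith, by linarith, by linarith⟩
  -- B ℓ is not identically zero on [a,b]
  have hNZ : ∀ ℓ, 1 ≤ ℓ → ℓ ≤ m → ∃ x ∈ Set.Icc a b, B ℓ x ≠ 0 := by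
    intro ℓ h1 h2
    by_contra hcon
    push_neg at hcon
    rcases eq_or_lt_of_le h1 with he | hℓ2
    · have := hcon a haI
      rw [← he] at this
      rw [hB1a] at this
      norm_num at this
    · -- ℓ ≥ 2 : all derivatives of B ℓ vanish on [a,b]
      have hder_all : ∀ r, r ≤ m-1 → ∀ x ∈ Set.Icc a b, iteratedDeriv r (B ℓ) x = 0 := by
        intro r hr
        have hcontr : Continuous (iteratedDeriv r (B ℓ)) :=
          (hsmB ℓ h1 h2).continuous_iteratedDeriv r (by exact_mod_cast hr)
        have heqon : Set.EqOn (iteratedDeriv r (B ℓ)) (fun _ => (0:ℝ)) (Set.Ioo a b) := by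
          intro x hx
          have hev : B ℓ =ᶠ[nhds x] (fun _ => (0:ℝ)) := by
            filter_upwards [Ioo_mem_nhds hx.1 hx.2] with y hy
            exact hcon y (Set.Ioo_subset_Icc_self hy)
          calc iteratedDeriv r (B ℓ) x = iteratedDeriv r (fun _ => (0:ℝ)) x :=
                hev.iteratedDeriv_eq r
            _ = 0 := Stmt8Aux.iteratedDeriv_zero_fun
        have hclos := heqon.closure hcontr continuous_const
        intro x hx
        have hxc : x ∈ closure (Set.Ioo a b) := by
          rw [closure_Ioo hab.ne]; exact hx
        exact hclos hxc
      -- improved vanishing of f ℓ at a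
      have hfa' : ∀ r, r < ℓ → iteratedDeriv r (f ℓ) a = 0 := by
        intro r hr
        have hA := hder_all r (by omega) a haI
        rw [hBit ℓ h1 h2 r (by omega)] at hA
        have hB2 := ha0' (ℓ+1) (by omega) (by omega) r (by omega)
        linarith
      have hcst := hforce (f ℓ) (hfS ℓ h1 h2) (a + (b-a)/3) (a + 2*(b-a)/3)
        hmid.1 hmid.2.1 hmid.2.2 (ℓ-1) 0 0 (m-ℓ) (by omega)
        (fun i hi => hfa' (i+1) (by omega))
        (fun i hi => by omega)
        (fun i hi => by omega)
        (fun i hi => hb0 ℓ (by omega) h2 (i+1) (by omega) (by omega))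
      have hcab := hcst a haI b hbI
      rw [hval_a0 ℓ (by omega) (by omega), hval_b ℓ h1 h2] at hcab
      norm_num at hcab

  -- exact order at a
  have hexa : ∀ ℓ, 1 ≤ ℓ → ℓ ≤ m → iteratedDeriv (ℓ-1) (B ℓ) a ≠ 0 := by
    intro ℓ h1 h2 h0
    have hfa : ∀ r, r < ℓ → iteratedDeriv r (B ℓ) a = 0 := by
      intro r hr
      rcases Nat.lt_or_ge r (ℓ-1) with h | h
      · exact hVA ℓ h1 h2 r h
      · have : r = ℓ-1 := by omega
        rw [this]; exact h0
    have hBcont : Continuous (B ℓ) := (hsmB ℓ h1 h2).continuous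
    have hBla : B ℓ a = 0 := by
      have := hfa 0 (by omega); simpa using this
    rcases eq_or_lt_of_le h2 with hlm | hlt
    · -- ℓ = m
      have hcst := hforce (B ℓ) (hBS ℓ h1 h2) (a + (b-a)/3) (a + 2*(b-a)/3)
        hmid.1 hmid.2.1 hmid.2.2 (m-1) 0 0 0 (by omega)
        (fun i hi => hfa (i+1) (by omega))
        (fun i hi => by omega) (fun i hi => by omega) (fun i hi => by omega)
      have hcab := hcst a haI b hbI
      rw [hBla, hlm, hBmb] at hcab
      norm_num at hcab
    · -- ℓ < m, use a Rolle point
      have hBlb : B ℓ b = 0 := hBb0 ℓ h1 hlt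
      obtain ⟨ξ, hξ, hdξ⟩ := exists_deriv_eq_zero hab hBcont.continuousOn
        (hBla.trans hBlb.symm)
      have hcst := hforce (B ℓ) (hBS ℓ h1 h2) ξ ((ξ + b)/2)
        hξ.1 (by linarith [hξ.2]) (by linarith [hξ.2]) (ℓ-1) 1 0 (m-ℓ-1) (by omega)
        (fun i hi => hfa (i+1) (by omega))
        (fun i hi => by
          have : i = 0 := by omega
          subst this
          rw [show (0+1 : ℕ) = 1 from rfl, iteratedDeriv_one]
          exact hdξ)
        (fun i hi => by omega)
        (fun i hi => hVB ℓ h1 h2 (i+1) (by omega))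
      obtain ⟨x, hxI, hxne⟩ := hNZ ℓ h1 h2
      exact hxne ((hcst x hxI a haI).trans hBla)
  -- exact order at b
  have hexb : ∀ ℓ, 1 ≤ ℓ → ℓ ≤ m → iteratedDeriv (m-ℓ) (B ℓ) b ≠ 0 := by
    intro ℓ h1 h2 h0
    have hfb : ∀ r, r < m-ℓ+1 → iteratedDeriv r (B ℓ) b = 0 := by
      intro r hr
      rcases Nat.lt_or_ge r (m-ℓ) with h | h
      · exact hVB ℓ h1 h2 r h
      · have : r = m-ℓ := by omega
        rw [this]; exact h0
    have hBcont : Continuous (B ℓ) := (hsmB ℓ h1 h2).continuous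
    have hBlb : B ℓ b = 0 := by
      have := hfb 0 (by omega); simpa using this
    rcases eq_or_lt_of_le h1 with he1 | hℓ2
    · -- ℓ = 1
      have hcst := hforce (B ℓ) (hBS ℓ h1 h2) (a + (b-a)/3) (a + 2*(b-a)/3)
        hmid.1 hmid.2.1 hmid.2.2 0 0 0 (m-1) (by omega)
        (fun i hi => by omega) (fun i hi => by omega) (fun i hi => by omega)
        (fun i hi => hfb (i+1) (by omega))
      have hcab := hcst a haI b hbI
      rw [hBlb, ← he1, hB1a] at hcab
      norm_num at hcab
    · -- ℓ ≥ 2, use a Rolle point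
      have hBla : B ℓ a = 0 := hBa0 ℓ (by omega) h2
      obtain ⟨ξ, hξ, hdξ⟩ := exists_deriv_eq_zero hab hBcont.continuousOn
        (hBla.trans hBlb.symm)
      have hcst := hforce (B ℓ) (hBS ℓ h1 h2) ξ ((ξ + b)/2)
        hξ.1 (by linarith [hξ.2]) (by linarith [hξ.2]) (ℓ-2) 1 0 (m-ℓ) (by omega)
        (fun i hi => hVA ℓ h1 h2 (i+1) (by omega))
        (fun i hi => by
          have : i = 0 := by omega
          subst this
          rw [show (0+1 : ℕ) = 1 from rfl, iteratedDeriv_one]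
          exact hdξ)
        (fun i hi => by omega)
        (fun i hi => hfb (i+1) (by omega))
      obtain ⟨x, hxI, hxne⟩ := hNZ ℓ h1 h2
      exact hxne ((hcst x hxI b hbI).trans hBlb)

  -- f ℓ has no zero in (a,b)
  have hfnz : ∀ ℓ, 1 ≤ ℓ → ℓ ≤ m → ∀ x ∈ Set.Ioo a b, f ℓ x ≠ 0 := by
    intro ℓ h1 h2 x₀ hx₀ h0
    rcases eq_or_lt_of_le h1 with he1 | hℓ2
    · rw [← he1, hf1] at h0
      norm_num at h0
    · have hfla : f ℓ a = 0 := hval_a0 ℓ (by omega) (by omega)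
      have hcontf : Continuous (f ℓ) := (hsmf ℓ h1 (by omega)).continuous
      obtain ⟨ξ, hξ, hdξ⟩ := exists_deriv_eq_zero hx₀.1 (hcontf.continuousOn)
        (hfla.trans h0.symm)
      have hcst := hforce (f ℓ) (hfS ℓ h1 h2) ξ x₀
        hξ.1 hξ.2 hx₀.2 (ℓ-2) 1 0 (m-ℓ) (by omega)
        (fun i hi => ha0 ℓ (by omega) h2 (i+1) (by omega))
        (fun i hi => by
          have : i = 0 := by omega
          subst this
          rw [show (0+1 : ℕ) = 1 from rfl, iteratedDeriv_one]
          exact hdξ)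
        (fun i hi => by omega)
        (fun i hi => hb0 ℓ (by omega) h2 (i+1) (by omega) (by omega))
      have hcab := hcst a haI b hbI
      rw [hfla, hval_b ℓ h1 h2] at hcab
      norm_num at hcab
  -- f ℓ is positive on (a,b)
  have hfpos : ∀ ℓ, 1 ≤ ℓ → ℓ ≤ m → ∀ x ∈ Set.Ioo a b, 0 < f ℓ x := by
    intro ℓ h1 h2 x hx
    rcases lt_trichotomy (f ℓ x) 0 with hneg | hz | hpos
    · exfalso
      have hcontf : Continuous (f ℓ) := (hsmf ℓ h1 (by omega)).continuous
      have hflb : f ℓ b = 1 := hval_b ℓ h1 h2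
      have : (0:ℝ) ∈ Set.Ioo (f ℓ x) (f ℓ b) := by
        rw [hflb]; exact ⟨hneg, by norm_num⟩
      obtain ⟨z, hz1, hz2⟩ := intermediate_value_Ioo hx.2.le hcontf.continuousOn this
      exact hfnz ℓ h1 h2 z ⟨hx.1.trans hz1.1, hz1.2⟩ hz2
    · exact absurd hz (hfnz ℓ h1 h2 x hx)
    · exact hpos
  -- the positivity of B ℓ on (a,b)
  have hBpos : ∀ ℓ, 1 ≤ ℓ → ℓ ≤ m → ∀ x ∈ Set.Ioo a b, 0 < B ℓ x := by
    intro ℓ h1 h2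
    have hBcont : Continuous (B ℓ) := (hsmB ℓ h1 h2).continuous
    -- leading coefficient equality
    have hceq : iteratedDeriv (ℓ-1) (B ℓ) a = iteratedDeriv (ℓ-1) (f ℓ) a := by
      rw [hBit ℓ h1 h2 (ℓ-1) (by omega),
        ha0' (ℓ+1) (by omega) (by omega) (ℓ-1) (by omega), sub_zero]
    have hcne : iteratedDeriv (ℓ-1) (f ℓ) a ≠ 0 := by
      rw [← hceq]; exact hexa ℓ h1 h2
    have hva_f : ∀ r, r < ℓ-1 → iteratedDeriv r (f ℓ) a = 0 := by
      intro r hr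
      exact ha0 ℓ (by omega) h2 r (by omega)
    -- c > 0
    have hcpos : 0 < iteratedDeriv (ℓ-1) (f ℓ) a := by
      obtain ⟨x₀, hx₀, hsn⟩ := Stmt8Aux.sign_near (hsmf ℓ h1 (by omega)) hab
        (by omega : ℓ-1 ≤ m-1) hva_f hcne
      have hxm : (a + x₀)/2 ∈ Set.Ioo a x₀ := ⟨by linarith [hx₀.1], by linarith [hx₀.1]⟩
      have h5 := hsn _ hxm
      have h6 : 0 < f ℓ ((a + x₀)/2) :=
        hfpos ℓ h1 h2 _ ⟨hxm.1, hxm.2.trans hx₀.2⟩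
      rcases mul_pos_iff.mp h5 with ⟨_, hc⟩ | ⟨hf, _⟩
      · exact hc
      · linarith
    -- a point where B ℓ is positive
    have hBsome : ∃ x₁ ∈ Set.Ioo a b, 0 < B ℓ x₁ := by
      obtain ⟨x₀, hx₀, hsn⟩ := Stmt8Aux.sign_near (hsmB ℓ h1 h2) hab
        (by omega : ℓ-1 ≤ m-1) (fun r hr => hVA ℓ h1 h2 r hr)
        (hexa ℓ h1 h2)
      have hxm : (a + x₀)/2 ∈ Set.Ioo a x₀ := ⟨by linarith [hx₀.1], by linarith [hx₀.1]⟩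
      have h5 := hsn _ hxm
      rw [hceq] at h5
      refine ⟨(a + x₀)/2, ⟨hxm.1, hxm.2.trans hx₀.2⟩, ?_⟩
      rcases mul_pos_iff.mp h5 with ⟨hBpos', _⟩ | ⟨_, hcneg⟩
      · exact hBpos'
      · linarith
    -- B ℓ has no zero in (a,b)
    have hBnz : ∀ x ∈ Set.Ioo a b, B ℓ x ≠ 0 := by
      intro x₀ hx₀ h0
      -- left Rolle-type point
      have hxi1 : ∃ t ∈ Set.Ioo a x₀, ∀ i, i < min (ℓ-1) 1 →
          iteratedDeriv (i+1) (B ℓ) t = 0 := by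
        rcases Nat.lt_or_ge ℓ 2 with hl1 | hl2
        · exact ⟨(a + x₀)/2, ⟨by linarith [hx₀.1], by linarith [hx₀.1]⟩,
            fun i hi => by omega⟩
        · have hBla : B ℓ a = 0 := hBa0 ℓ hl2 h2
          obtain ⟨ξ, hξ, hdξ⟩ := exists_deriv_eq_zero hx₀.1 hBcont.continuousOn
            (hBla.trans h0.symm)
          refine ⟨ξ, hξ, fun i hi => ?_⟩
          have : i = 0 := by omega
          subst this
          rw [show (0+1 : ℕ) = 1 from rfl, iteratedDeriv_one]
          exact hdξ
      have hxi2 : ∃ t ∈ Set.Ioo x₀ b, ∀ i, i < min (m-ℓ) 1 →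
          iteratedDeriv (i+1) (B ℓ) t = 0 := by
        rcases Nat.lt_or_ge ℓ m with hlm | hge
        · have hBlb : B ℓ b = 0 := hBb0 ℓ h1 hlm
          obtain ⟨ξ, hξ, hdξ⟩ := exists_deriv_eq_zero hx₀.2 hBcont.continuousOn
            (h0.trans hBlb.symm)
          refine ⟨ξ, hξ, fun i hi => ?_⟩
          have : i = 0 := by omega
          subst this
          rw [show (0+1 : ℕ) = 1 from rfl, iteratedDeriv_one]
          exact hdξ
        · exact ⟨(x₀ + b)/2, ⟨by linarith [hx₀.2], by linarith [hx₀.2]⟩,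
            fun i hi => by omega⟩
      obtain ⟨ξ₁, hξ₁, hv₁⟩ := hxi1
      obtain ⟨ξ₂, hξ₂, hv₂⟩ := hxi2
      have hcst := hforce (B ℓ) (hBS ℓ h1 h2) ξ₁ ξ₂
        hξ₁.1 (hξ₁.2.trans hξ₂.1) hξ₂.2
        (ℓ-2) (min (ℓ-1) 1) (min (m-ℓ) 1) (m-ℓ-1) (by omega)
        (fun i hi => hVA ℓ h1 h2 (i+1) (by omega))
        hv₁ hv₂
        (fun i hi => hVB ℓ h1 h2 (i+1) (by omega))
      obtain ⟨x, hxI, hxne⟩ := hNZ ℓ h1 h2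
      exact hxne ((hcst x hxI x₀ (Set.Ioo_subset_Icc_self hx₀)).trans h0)
    intro x hx
    obtain ⟨x₁, hx₁, hBx₁⟩ := hBsome
    rcases lt_trichotomy (B ℓ x) 0 with hneg | hz | hpos
    · exfalso
      rcases lt_trichotomy x x₁ with hlt | heq | hgt
      · have : (0:ℝ) ∈ Set.Ioo (B ℓ x) (B ℓ x₁) := ⟨hneg, hBx₁⟩
        obtain ⟨z, hz1, hz2⟩ := intermediate_value_Ioo hlt.le hBcont.continuousOn this
        exact hBnz z ⟨hx.1.trans hz1.1, hz1.2.trans hx₁.2⟩ hz2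
      · rw [heq] at hneg; linarith
      · have : (0:ℝ) ∈ Set.Ioo (B ℓ x) (B ℓ x₁) := ⟨hneg, hBx₁⟩
        obtain ⟨z, hz1, hz2⟩ := intermediate_value_Ioo' hgt.le hBcont.continuousOn this
        exact hBnz z ⟨hx₁.1.trans hz1.1, hz1.2.trans hx.2⟩ hz2
    · exact absurd hz (hBnz x hx)
    · exact hpos
  exact ⟨part1, fun ℓ h1 h2 =>
    ⟨⟨fun r hr => hVA ℓ h1 h2 r hr, hexa ℓ h1 h2⟩,
     ⟨fun r hr => hVB ℓ h1 h2 r hr, hexb ℓ h1 h2⟩,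
     hBpos ℓ h1 h2⟩⟩
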